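/- Let K ⊆ ℝ^m be a regular closed convex cone, e ∈ int K, c_D > 0 and w ∈ ℝ^m. Then: (a) the supremum sup{t ∈ ℝ : t ≤ 0 and w − t e ∈ K} is attained and equals t_opt := min(0, λ_min(w)); and (b) the conic linear program min{⟨w, s⟩ : s ∈ K*, ⟨e, s⟩ ≤ c_D} has an optimal solution and its optimal value equals c_D · min(0, λ_min(w)). -/

import Mathlib

open scoped RealInnerProductSpace

set_option maxHeartbeats 1000000

/-- For a regular closed convex cone `K ⊆ ℝ^m`, `e ∈ int K`,
`c_D > 0` and `w ∈ ℝ^m`: (a) `sup {t ≤ 0 | w - t e ∈ K}` is attained and equals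
`t_opt = min(0, λ_min(w))`, where `λ_min(w) = sup {t | w - t e ∈ K}`; (b) the conic
program `min {⟨w,s⟩ : s ∈ K*, ⟨e,s⟩ ≤ c_D}` has an optimal solution and its optimal
value is `c_D · min(0, λ_min(w))`. -/
theorem stmt_11 {m : ℕ} (K : Set (EuclideanSpace ℝ (Fin m)))
    (hclosed : IsClosed K) (hconv : Convex ℝ K)
    (hcone : ∀ (c : ℝ), 0 ≤ c → ∀ x ∈ K, c • x ∈ K)
    (hpointed : K ∩ (-K) = {0}) (hfull : (interior K).Nonempty)
    (e : EuclideanSpace ℝ (Fin m)) (he : e ∈ interior K)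
    (cD : ℝ) (hcD : 0 < cD) (w : EuclideanSpace ℝ (Fin m)) :
    IsGreatest {t : ℝ | t ≤ 0 ∧ w - t • e ∈ K}
      (min 0 (sSup {t : ℝ | w - t • e ∈ K})) ∧
    IsLeast ((fun s => ⟪w, s⟫) ''
        {s : EuclideanSpace ℝ (Fin m) | (∀ x ∈ K, 0 ≤ ⟪x, s⟫) ∧ ⟪e, s⟫ ≤ cD})
      (cD * min 0 (sSup {t : ℝ | w - t • e ∈ K})) := by
  classical
  have heK : e ∈ K := interior_subset he
  have hK0 : (0 : EuclideanSpace ℝ (Fin m)) ∈ K := by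
    have : (0 : EuclideanSpace ℝ (Fin m)) ∈ K ∩ (-K) := by rw [hpointed]; rfl
    exact this.1
  have hadd : ∀ x ∈ K, ∀ y ∈ K, x + y ∈ K := by
    intro x hx y hy
    have h2 : ((1:ℝ)/2) • x + ((1:ℝ)/2) • y ∈ K :=
      hconv hx hy (by norm_num) (by norm_num) (by norm_num)
    have := hcone 2 (by norm_num) _ h2
    simpa [smul_add, smul_smul] using this
  by_cases he0 : e = 0
  · -- degenerate case : the space is trivial
    have hsub : ∀ x : EuclideanSpace ℝ (Fin m), x = 0 := by
      intro x
      rw [he0] at he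
      obtain ⟨ε, hε, hball⟩ := Metric.mem_nhds_iff.mp (mem_interior_iff_mem_nhds.mp he)
      have hmem : ∀ y : EuclideanSpace ℝ (Fin m), ‖y‖ < ε → y ∈ K := by
        intro y hy
        exact hball (by simpa [Metric.mem_ball, dist_zero_right] using hy)
      set c : ℝ := ε / (2 * (‖x‖ + 1)) with hc
      have hcpos : 0 < c := by positivity
      have hnorm : ‖c • x‖ < ε := by
        rw [norm_smul, Real.norm_eq_abs, abs_of_pos hcpos, hc]
        calc ε / (2 * (‖x‖ + 1)) * ‖x‖ < ε / (2 * (‖x‖ + 1)) * (2 * (‖x‖ + 1)) := by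
              apply mul_lt_mul_of_pos_left _ hcpos
              nlinarith [norm_nonneg x]
          _ = ε := by field_simp
      have h1 : c • x ∈ K := hmem _ hnorm
      have h2 : c • x ∈ -K := by
        rw [Set.mem_neg]
        exact hmem _ (by simpa using hnorm)
      have : c • x ∈ K ∩ (-K) := ⟨h1, h2⟩
      rw [hpointed] at this
      rcases smul_eq_zero.mp (Set.mem_singleton_iff.mp this) with h | h
      · exact absurd h (ne_of_gt hcpos)
      · exact h
    have hw0 : w = 0 := hsub w
    have hS : {t : ℝ | w - t • e ∈ K} = Set.univ := by
      ext t; simp [he0, hw0, hK0]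
    rw [hS, Real.sSup_univ]
    simp only [min_self, mul_zero]
    constructor
    · exact ⟨⟨le_refl 0, by simp [he0, hw0, hK0]⟩, fun t ht => ht.1⟩
    · constructor
      · exact ⟨0, ⟨fun x hx => by simp, by simp [hcD.le]⟩, by simp⟩
      · rintro v ⟨s, hs, rfl⟩
        simp [hw0]
  · -- main case : e ≠ 0
    set S : Set ℝ := {t : ℝ | w - t • e ∈ K} with hSdef
    -- S is nonempty
    obtain ⟨ε, hε, hball⟩ := Metric.mem_nhds_iff.mp (mem_interior_iff_mem_nhds.mp he)
    have hSne : S.Nonempty := by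
      set s : ℝ := ‖w‖ / ε + 1 with hs
      have hspos : 0 < s := by positivity
      refine ⟨-s, ?_⟩
      have h1 : e + s⁻¹ • w ∈ K := by
        apply hball
        rw [Metric.mem_ball, dist_eq_norm]
        have : ‖e + s⁻¹ • w - e‖ = ‖w‖ / s := by
          rw [add_sub_cancel_left, norm_smul, Real.norm_eq_abs,
            abs_of_pos (inv_pos.mpr hspos)]
          ring
        rw [this]
        rw [div_lt_iff₀ hspos]
        have h3 : ‖w‖ / ε * ε = ‖w‖ := div_mul_cancel₀ ‖w‖ (ne_of_gt hε)
        have h4 : ε * s = ‖w‖ + ε := by rw [hs]; rw [mul_add, mul_one, mul_comm]; rw [h3]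
        linarith
      have h2 := hcone s hspos.le _ h1
      have : s • (e + s⁻¹ • w) = w - (-s) • e := by
        rw [smul_add, smul_smul, mul_inv_cancel₀ (ne_of_gt hspos)]
        module
      rw [this] at h2
      exact h2
    -- S is bounded above
    have hneK : -e ∉ K := by
      intro hne
      have : e ∈ K ∩ (-K) := ⟨heK, by simpa [Set.mem_neg] using hne⟩
      rw [hpointed] at this
      exact he0 (Set.mem_singleton_iff.mp this)
    have hd : 0 < Metric.infDist (-e) K :=
      (IsClosed.notMem_iff_infDist_pos hclosed ⟨0, hK0⟩).mp hneK
    set d : ℝ := Metric.infDist (-e) K with hddef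
    have hSbdd : BddAbove S := by
      refine ⟨max 1 (‖w‖ / d), ?_⟩
      intro t ht
      rcases le_or_gt t 1 with h | h
      · exact le_max_of_le_left h
      · have htpos : 0 < t := lt_trans one_pos h
        have h1 : t⁻¹ • (w - t • e) ∈ K := hcone t⁻¹ (inv_pos.mpr htpos).le _ ht
        have h2 : d ≤ dist (-e) (t⁻¹ • (w - t • e)) := Metric.infDist_le_dist_of_mem h1
        have h3 : dist (-e) (t⁻¹ • (w - t • e)) = ‖w‖ / t := by
          rw [dist_eq_norm]
          have : -e - t⁻¹ • (w - t • e) = -(t⁻¹ • w) := by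
            rw [smul_sub, smul_smul, inv_mul_cancel₀ (ne_of_gt htpos)]
            module
          rw [this, norm_neg, norm_smul, Real.norm_eq_abs, abs_of_pos (inv_pos.mpr htpos)]
          ring
        rw [h3] at h2
        have : t ≤ ‖w‖ / d := by
          rw [le_div_iff₀ hd]
          rw [le_div_iff₀ htpos] at h2
          linarith [mul_comm t d, mul_comm d t]
        exact le_max_of_le_right this
    -- S is closed and downward closed
    have hSclosed : IsClosed S := by
      have : S = (fun t : ℝ => w - t • e) ⁻¹' K := rfl
      rw [this]
      exact hclosed.preimage (continuous_const.sub (continuous_id.smul continuous_const))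
    have hSdc : ∀ t ∈ S, ∀ t' ≤ t, t' ∈ S := by
      intro t ht t' ht'
      have h1 : (t - t') • e ∈ K := hcone _ (by linarith) _ heK
      have h2 := hadd _ ht _ h1
      have : w - t • e + (t - t') • e = w - t' • e := by module
      rwa [this] at h2
    set lam : ℝ := sSup S with hlam
    have hlamS : lam ∈ S := hSclosed.csSup_mem hSne hSbdd
    have htopt : min 0 lam ∈ S := by
      rcases le_total 0 lam with h | h
      · rw [min_eq_left h]
        exact hSdc lam hlamS 0 h
      · rw [min_eq_right h]
        exact hlamS
    have hub : ∀ t ∈ S, t ≤ lam := fun t ht => le_csSup hSbdd ht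
    constructor
    · -- part (a)
      constructor
      · exact ⟨min_le_left _ _, htopt⟩
      · rintro t ⟨ht0, htS⟩
        exact le_min ht0 (hub t htS)
    · -- part (b)
      constructor
      · -- attainment of the optimum
        rcases le_or_gt 0 lam with hl | hl
        · -- λ ≥ 0 : s = 0 is optimal
          rw [min_eq_left hl]
          exact ⟨0, ⟨fun x hx => by simp, by simp [hcD.le]⟩, by simp⟩
        · -- λ < 0 : separating hyperplane at w - λ e
          rw [min_eq_right hl.le]
          set z : EuclideanSpace ℝ (Fin m) := w - lam • e with hz
          have hzK : z ∈ K := hlamS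
          have hzint : z ∉ interior K := by
            intro hzi
            obtain ⟨δ, hδ, hballz⟩ := Metric.mem_nhds_iff.mp (mem_interior_iff_mem_nhds.mp hzi)
            have hepos : 0 < ‖e‖ := norm_pos_iff.mpr he0
            set r : ℝ := δ / (2 * ‖e‖) with hr
            have hrpos : 0 < r := by positivity
            have : w - (lam + r) • e ∈ K := by
              apply hballz
              rw [Metric.mem_ball, dist_eq_norm]
              have : w - (lam + r) • e - z = -(r • e) := by rw [hz]; module
              rw [this, norm_neg, norm_smul, Real.norm_eq_abs, abs_of_pos hrpos, hr]
              have hkey : δ / (2 * ‖e‖) * ‖e‖ = δ / 2 := by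
                rw [div_mul_eq_mul_div, mul_comm δ ‖e‖, mul_comm (2:ℝ) ‖e‖,
                  mul_div_mul_left _ _ (ne_of_gt hepos)]
              rw [hkey]
              linarith
            have := hub _ this
            linarith
          obtain ⟨f, hf⟩ := geometric_hahn_banach_open_point hconv.interior isOpen_interior hzint
          -- f ≤ f z on all of K
          have hfK : ∀ a ∈ K, f a ≤ f z := by
            intro a ha
            have hacl : a ∈ closure (interior K) := by
              have hseq : ∀ n : ℕ, a + ((1:ℝ)/(n+1)) • (e - a) ∈ interior K := by
                intro n
                refine hconv.add_smul_sub_mem_interior ha he ⟨by positivity, ?_⟩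
                rw [div_le_one (by positivity)]
                linarith [Nat.cast_nonneg (α := ℝ) n]
              have h0 : Filter.Tendsto (fun n : ℕ => (1:ℝ)/(n+1)) Filter.atTop (nhds 0) :=
                tendsto_one_div_add_atTop_nhds_zero_nat
              have htt : Filter.Tendsto (fun n : ℕ => a + ((1:ℝ)/(n+1)) • (e - a))
                  Filter.atTop (nhds a) := by
                have := Filter.Tendsto.add (tendsto_const_nhds (x := a))
                  (h0.smul_const (e - a))
                simpa using this
              exact mem_closure_of_tendsto htt (Filter.Eventually.of_forall hseq)
            have hsubset : closure (interior K) ⊆ {x | f x ≤ f z} :=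
              closure_minimal (fun x hx => (hf x hx).le)
                (isClosed_le f.continuous continuous_const)
            exact hsubset hacl
          have hfz_nonneg : (0:ℝ) ≤ f z := by simpa using hfK 0 hK0
          have hfKle : ∀ x ∈ K, f x ≤ 0 := by
            intro x hx
            by_contra hpos
            push_neg at hpos
            have hc : (0:ℝ) ≤ (f z + 1) / f x :=
              div_nonneg (by linarith) hpos.le
            have := hfK _ (hcone _ hc _ hx)
            rw [map_smul] at this
            rw [smul_eq_mul, div_mul_cancel₀ _ (ne_of_gt hpos)] at this
            linarith
          have hfz0 : f z = 0 := le_antisymm (hfKle z hzK) hfz_nonneg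
          have hfe : f e < 0 := by
            have := hf e he
            rwa [hfz0] at this
          -- construct the optimal dual solution
          set v : EuclideanSpace ℝ (Fin m) :=
            (InnerProductSpace.toDual ℝ (EuclideanSpace ℝ (Fin m))).symm f with hv
          have hvin : ∀ x : EuclideanSpace ℝ (Fin m), ⟪x, v⟫ = f x := by
            intro x
            rw [real_inner_comm, hv, InnerProductSpace.toDual_symm_apply]
          set sstar : EuclideanSpace ℝ (Fin m) := (cD / (-(f e))) • (-v) with hsstar
          have hcoef : 0 < cD / (-(f e)) := div_pos hcD (by linarith)
          have hinner : ∀ x : EuclideanSpace ℝ (Fin m), ⟪x, sstar⟫ = (cD / (-(f e))) * (-(f x)) := by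
            intro x
            rw [hsstar, real_inner_smul_right, inner_neg_right, hvin]
          refine ⟨sstar, ⟨?_, ?_⟩, ?_⟩
          · intro x hx
            rw [hinner]
            have hx0 : f x ≤ 0 := hfKle x hx
            nlinarith
          · rw [hinner, div_mul_cancel₀ _ (by linarith : -(f e) ≠ 0)]
          · show ⟪w, sstar⟫ = cD * lam
            rw [hinner]
            have hfw : f w = lam * f e := by
              have : w = z + lam • e := by rw [hz]; module
              rw [this, map_add, map_smul, hfz0, smul_eq_mul, zero_add]
            rw [hfw]
            field_simp
            rw [mul_div_cancel_left₀ lam (ne_of_lt hfe)]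
      · -- lower bound (weak duality)
        rintro v ⟨s, ⟨hsK, hse⟩, rfl⟩
        show cD * min 0 lam ≤ ⟪w, s⟫
        have hdecomp : ⟪w, s⟫ = ⟪w - (min 0 lam) • e, s⟫ + (min 0 lam) * ⟪e, s⟫ := by
          rw [← real_inner_smul_left, ← inner_add_left]
          congr 1
          module
        rw [hdecomp]
        have h1 : 0 ≤ ⟪w - (min 0 lam) • e, s⟫ := hsK _ htopt
        have h2 : 0 ≤ ⟪e, s⟫ := hsK _ heK
        have h3 : min 0 lam ≤ 0 := min_le_left _ _
        nlinarith
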